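/- Let Υ > 0. For every h ∈ 𝓗_2 with ∫_{Z_T} h² dν_T < ∞, one has sup_{g ∈ S^Υ} ∫_{Z_T} h(ζ) |g(ζ) − 1| ν_T(dζ) < ∞. -/

import Mathlib

open MeasureTheory Filter Topology
open scoped ENNReal

/-- The set `S^Υ` of nonnegative measurable functions `g` on `(Z_T, ν_T)` with
`∫ ℓ(g) dν_T ≤ Υ`, where `ℓ(r) = r log r − r + 1`. -/
def entS {X : Type*} [MeasurableSpace X] (μ : Measure X) (Υ : ℝ) : Set (X → ℝ) :=
  {g | Measurable g ∧ (∀ x, 0 ≤ g x) ∧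
    ∫⁻ x, ENNReal.ofReal (g x * Real.log (g x) - g x + 1) ∂μ ≤ ENNReal.ofReal Υ}

/-- The class `𝓗_p`: nonnegative measurable `h` on `(Z_T, ν_T)` such that for some `δ > 0`,
`∫_E exp(δ h^p) dν_T < ∞` for every measurable `E` with `ν_T(E) < ∞`. -/
def memHp {X : Type*} [MeasurableSpace X] (μ : Measure X) (p : ℝ) (h : X → ℝ) : Prop :=
  Measurable h ∧ (∀ x, 0 ≤ h x) ∧
    ∃ δ > (0:ℝ), ∀ E : Set X, MeasurableSet E → μ E < ∞ →
      ∫⁻ x in E, ENNReal.ofReal (Real.exp (δ * h x ^ p)) ∂μ < ∞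

section AuxLemmas
open Real

lemma ell_nonneg (r : ℝ) (hr : 0 ≤ r) : 0 ≤ r * Real.log r - r + 1 := by
  rcases eq_or_lt_of_le hr with h0 | h0
  · simp [← h0]
  · have h1 := Real.log_le_sub_one_of_pos (x := 1/r) (by positivity)
    rw [Real.log_div one_ne_zero (ne_of_gt h0), Real.log_one] at h1
    have h2 : (0 - Real.log r) * r ≤ (1/r - 1) * r := by
      apply mul_le_mul_of_nonneg_right _ hr
      linarith
    rw [sub_mul, one_div] at h2
    have h3 : r⁻¹ * r = 1 := inv_mul_cancel₀ (ne_of_gt h0)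
    nlinarith

lemma sqrt_ineq (r : ℝ) (hr : 0 ≤ r) :
    (Real.sqrt r - 1)^2 ≤ r * Real.log r - r + 1 := by
  rcases eq_or_lt_of_le hr with h0 | h0
  · simp [← h0]
  · set s := Real.sqrt r with hs
    have hspos : 0 < s := Real.sqrt_pos.mpr h0
    have hs2 : s^2 = r := Real.sq_sqrt hr
    have hlog : Real.log r = 2 * Real.log s := by
      rw [← hs2, sq, Real.log_mul (ne_of_gt hspos) (ne_of_gt hspos)]; ring
    have key : 0 ≤ s * Real.log s - s + 1 := ell_nonneg s (le_of_lt hspos)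
    rw [hlog, ← hs2]
    nlinarith [mul_le_mul_of_nonneg_left key (le_of_lt hspos)]

lemma young_ineq (t r : ℝ) (hr : 0 ≤ r) :
    t * r ≤ r * Real.log r - r + Real.exp t := by
  rcases eq_or_lt_of_le hr with h0 | h0
  · simp [← h0]; positivity
  · have h1 := Real.add_one_le_exp (t - Real.log r)
    have h2 : r * ((t - Real.log r) + 1) ≤ r * Real.exp (t - Real.log r) :=
      mul_le_mul_of_nonneg_left h1 hr
    rw [Real.exp_sub, Real.exp_log h0, mul_div_cancel₀ _ (ne_of_gt h0)] at h2
    nlinarith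

lemma key_ineq (δ M t r : ℝ) (hδ : 0 < δ) (hM : 1/δ ≤ M) (ht : 0 ≤ t) (hr : 0 ≤ r) :
    t * |r - 1| ≤ t^2/2 + (4 + Real.exp M / (Real.sqrt 2 - 1)^2) * (r * Real.log r - r + 1)
      + (if t ≤ M then 0 else Real.exp (δ * t^2)) := by
  have hL : 0 ≤ r * Real.log r - r + 1 := ell_nonneg r hr
  have hsqrt2 : 1 < Real.sqrt 2 := by
    rw [show (1:ℝ) = Real.sqrt 1 by simp]
    exact Real.sqrt_lt_sqrt (by norm_num) (by norm_num)
  have hc2 : 0 < (Real.sqrt 2 - 1)^2 := by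
    have h : 0 < Real.sqrt 2 - 1 := by linarith
    positivity
  have hψ : 0 ≤ (if t ≤ M then 0 else Real.exp (δ * t^2)) := by
    split
    · exact le_rfl
    · exact (Real.exp_pos _).le
  have hcoef : 0 ≤ Real.exp M / (Real.sqrt 2 - 1)^2 := by positivity
  rcases le_or_gt r 2 with hr2 | hr2
  · -- case r ≤ 2 : (r-1)^2 ≤ 6 L
    set s := Real.sqrt r with hs
    have hsnn : 0 ≤ s := Real.sqrt_nonneg r
    have hs2 : s^2 = r := Real.sq_sqrt hr
    have h1 : (s - 1)^2 ≤ r * Real.log r - r + 1 := sqrt_ineq r hr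
    have h2 : (s + 1)^2 ≤ 6 := by nlinarith
    have h3 : (r - 1)^2 ≤ 6 * (r * Real.log r - r + 1) := by
      have : (r - 1)^2 = (s - 1)^2 * (s + 1)^2 := by rw [← hs2]; ring
      rw [this]
      calc (s - 1)^2 * (s + 1)^2 ≤ (r * Real.log r - r + 1) * 6 :=
            mul_le_mul h1 h2 (sq_nonneg _) hL
        _ = 6 * (r * Real.log r - r + 1) := by ring
    have h4 : t * |r - 1| ≤ t^2/2 + (r-1)^2/2 := by
      have := sq_nonneg (t - |r - 1|)
      have habs : |r - 1|^2 = (r-1)^2 := sq_abs _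
      nlinarith
    nlinarith
  · -- case r > 2
    have habs : |r - 1| = r - 1 := abs_of_pos (by linarith)
    have hy : t * r ≤ r * Real.log r - r + Real.exp t := young_ineq t r hr
    have hexp : Real.exp t ≤ Real.exp M + (if t ≤ M then 0 else Real.exp (δ * t^2)) := by
      split_ifs with htM
      · have := Real.exp_le_exp.mpr htM
        linarith
      · push_neg at htM
        have hMpos : 0 < M := lt_of_lt_of_le (by positivity) hM
        have htpos : 0 < t := lt_trans hMpos htM
        have h1 : 1 ≤ δ * M := by
          rw [div_le_iff₀ hδ] at hM; linarith [hM]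
        have h2 : t ≤ δ * t^2 := by nlinarith
        have h3 := Real.exp_le_exp.mpr h2
        linarith [Real.exp_pos M]
    -- exp M ≤ (exp M / c2) * L since L ≥ (sqrt r - 1)^2 ≥ (sqrt 2 - 1)^2
    have hsr : Real.sqrt 2 ≤ Real.sqrt r := Real.sqrt_le_sqrt (by linarith)
    have hLlb : (Real.sqrt 2 - 1)^2 ≤ r * Real.log r - r + 1 := by
      have h1 := sqrt_ineq r hr
      nlinarith [Real.sqrt_nonneg r]
    have hM2 : Real.exp M ≤ (Real.exp M / (Real.sqrt 2 - 1)^2) * (r * Real.log r - r + 1) := by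
      rw [div_mul_eq_mul_div, le_div_iff₀ hc2]
      exact mul_le_mul_of_nonneg_left hLlb (le_of_lt (Real.exp_pos M))
    rw [habs]
    linarith [hy, hexp, hM2, hL, sq_nonneg t,
      mul_le_mul_of_nonneg_left (show r - 1 ≤ r by linarith) ht]

end AuxLemmas

/-- for `h ∈ 𝓗_2 ∩ L²(ν_T)`,
`sup_{g ∈ S^Υ} ∫ h |g − 1| dν_T < ∞`. -/
theorem statement5 {X : Type*} [MeasurableSpace X] (νT : Measure X) [SigmaFinite νT]
    (Υ : ℝ) (hΥ : 0 < Υ)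
    (h : X → ℝ) (hH2 : memHp νT 2 h)
    (hL2 : ∫⁻ x, ENNReal.ofReal (h x ^ 2) ∂νT < ∞) :
    (⨆ g ∈ entS νT Υ, ∫⁻ x, ENNReal.ofReal (h x * |g x - 1|) ∂νT) < ∞ := by
  obtain ⟨hmeas, hnn, δ, hδ, hint⟩ := hH2
  set M : ℝ := max (1/δ) 1 with hMdef
  have hM1 : 1/δ ≤ M := le_max_left _ _
  have hM2 : (1:ℝ) ≤ M := le_max_right _ _
  set C : ℝ := 4 + Real.exp M / (Real.sqrt 2 - 1)^2 with hCdef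
  have hsqrt2 : 1 < Real.sqrt 2 := by
    rw [show (1:ℝ) = Real.sqrt 1 by simp]
    exact Real.sqrt_lt_sqrt (by norm_num) (by norm_num)
  have hCnn : 0 ≤ C := by
    have h1 : 0 < Real.sqrt 2 - 1 := by linarith
    positivity
  -- The exceptional set E = {x | M < h x}
  set E : Set X := {x | M < h x} with hEdef
  have hEmeas : MeasurableSet E := measurableSet_lt measurable_const hmeas
  have hEfin : νT E < ∞ := by
    have hle : νT E ≤ ∫⁻ x, ENNReal.ofReal (h x ^ 2) ∂νT := by
      calc νT E = ∫⁻ x in E, 1 ∂νT := (setLIntegral_one E).symm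
        _ ≤ ∫⁻ x in E, ENNReal.ofReal (h x ^ 2) ∂νT := by
            apply setLIntegral_mono ((hmeas.pow_const 2).ennreal_ofReal)
            intro x hx
            have hx' : M < h x := hx
            have : (1:ℝ) ≤ h x ^ 2 := by nlinarith
            calc (1:ℝ≥0∞) = ENNReal.ofReal 1 := by simp
              _ ≤ ENNReal.ofReal (h x ^ 2) := ENNReal.ofReal_le_ofReal this
        _ ≤ ∫⁻ x, ENNReal.ofReal (h x ^ 2) ∂νT := setLIntegral_le_lintegral _ _
    exact lt_of_le_of_lt hle hL2
  -- the function ψ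
  set ψ : X → ℝ := fun x => if h x ≤ M then 0 else Real.exp (δ * h x ^ 2) with hψdef
  have hψint : ∫⁻ x, ENNReal.ofReal (ψ x) ∂νT < ∞ := by
    have hrpow : ∀ x : X, h x ^ (2:ℝ) = h x ^ 2 := fun x => by
      rw [show (2:ℝ) = ((2:ℕ):ℝ) by norm_num, Real.rpow_natCast]
    have heq : (fun x => ENNReal.ofReal (ψ x)) =
        E.indicator (fun x => ENNReal.ofReal (Real.exp (δ * h x ^ 2))) := by
      funext x
      simp only [Set.indicator, hEdef, Set.mem_setOf_eq, hψdef]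
      rcases le_or_gt (h x) M with hx | hx
      · rw [if_pos hx, if_neg (not_lt.mpr hx), ENNReal.ofReal_zero]
      · rw [if_neg (not_le.mpr hx), if_pos hx]
    rw [heq, lintegral_indicator hEmeas]
    have := hint E hEmeas hEfin
    simpa [hrpow] using this
  -- the uniform bound
  set A := ∫⁻ x, ENNReal.ofReal (h x ^ 2) ∂νT with hAdef
  set Ψ := ∫⁻ x, ENNReal.ofReal (ψ x) ∂νT with hΨdef
  set B : ℝ≥0∞ := A + ENNReal.ofReal C * ENNReal.ofReal Υ + Ψ with hBdef
  have hBfin : B < ∞ := by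
    rw [hBdef]
    refine ENNReal.add_lt_top.mpr ⟨ENNReal.add_lt_top.mpr ⟨hL2, ?_⟩, hψint⟩
    exact ENNReal.mul_lt_top ENNReal.ofReal_lt_top ENNReal.ofReal_lt_top
  refine lt_of_le_of_lt (iSup₂_le fun g hg => ?_) hBfin
  obtain ⟨hgmeas, hgnn, hgent⟩ := hg
  -- pointwise bound
  have hpt : ∀ x, ENNReal.ofReal (h x * |g x - 1|) ≤
      ENNReal.ofReal (h x ^ 2) +
      ENNReal.ofReal (C * (g x * Real.log (g x) - g x + 1)) +
      ENNReal.ofReal (ψ x) := by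
    intro x
    have hk := key_ineq δ M (h x) (g x) hδ hM1 (hnn x) (hgnn x)
    calc ENNReal.ofReal (h x * |g x - 1|)
        ≤ ENNReal.ofReal (h x ^ 2 / 2 + C * (g x * Real.log (g x) - g x + 1) + ψ x) :=
          ENNReal.ofReal_le_ofReal hk
      _ ≤ ENNReal.ofReal (h x ^ 2 / 2 + C * (g x * Real.log (g x) - g x + 1)) +
            ENNReal.ofReal (ψ x) := ENNReal.ofReal_add_le
      _ ≤ ENNReal.ofReal (h x ^ 2 / 2) +
            ENNReal.ofReal (C * (g x * Real.log (g x) - g x + 1)) +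
            ENNReal.ofReal (ψ x) := add_le_add_left ENNReal.ofReal_add_le _
      _ ≤ _ :=
          add_le_add_left (add_le_add_left
            (ENNReal.ofReal_le_ofReal (by nlinarith [sq_nonneg (h x)])) _) _
  calc ∫⁻ x, ENNReal.ofReal (h x * |g x - 1|) ∂νT
      ≤ ∫⁻ x, (ENNReal.ofReal (h x ^ 2) +
          ENNReal.ofReal (C * (g x * Real.log (g x) - g x + 1)) +
          ENNReal.ofReal (ψ x)) ∂νT := lintegral_mono hpt
    _ = (∫⁻ x, ENNReal.ofReal (h x ^ 2) ∂νT) +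
          (∫⁻ x, ENNReal.ofReal (C * (g x * Real.log (g x) - g x + 1)) ∂νT) +
          (∫⁻ x, ENNReal.ofReal (ψ x) ∂νT) := by
        have m1 : Measurable fun x => ENNReal.ofReal (h x ^ 2) :=
          (hmeas.pow_const 2).ennreal_ofReal
        have m2 : Measurable fun x =>
            ENNReal.ofReal (C * (g x * Real.log (g x) - g x + 1)) :=
          ((((hgmeas.mul (Real.measurable_log.comp hgmeas)).sub hgmeas).add
            measurable_const).const_mul C).ennreal_ofReal
        rw [lintegral_add_left (by exact m1.add m2 : Measurable fun x => ENNReal.ofReal (h x ^ 2) + ENNReal.ofReal (C * (g x * Real.log (g x) - g x + 1))), lintegral_add_left m1]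
    _ ≤ A + ENNReal.ofReal C * ENNReal.ofReal Υ + Ψ := by
        gcongr
        calc ∫⁻ x, ENNReal.ofReal (C * (g x * Real.log (g x) - g x + 1)) ∂νT
            = ∫⁻ x, ENNReal.ofReal C * ENNReal.ofReal (g x * Real.log (g x) - g x + 1) ∂νT := by
              congr 1; funext x; exact ENNReal.ofReal_mul hCnn
          _ = ENNReal.ofReal C * ∫⁻ x, ENNReal.ofReal (g x * Real.log (g x) - g x + 1) ∂νT :=
              lintegral_const_mul' _ _ ENNReal.ofReal_ne_top
          _ ≤ ENNReal.ofReal C * ENNReal.ofReal Υ := by gcongr
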